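/- Let Γ_d be the Andrásfai graph with D_2 = {d+1,...,2d} and D_3 = {2d+1,...,3d-1}. Then the subgraph of Γ_d induced on D_2 ∪ D_3 has no induced matching with two edges. -/

import Mathlib

/-- The Andrásfai graph `Γ_d`: vertex set `ZMod (3*d-1)`, with `x` adjacent to `y`
iff `y - x ∈ {d, ..., 2*d-1}` (the condition is symmetrized). -/
def andrasfai (d : ℕ) : SimpleGraph (ZMod (3 * d - 1)) where
  Adj x y := x ≠ y ∧ ((d ≤ (y - x).val ∧ (y - x).val ≤ 2 * d - 1) ∨
      (d ≤ (x - y).val ∧ (x - y).val ≤ 2 * d - 1))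
  symm := ⟨fun x y h => ⟨h.1.symm, h.2.symm⟩⟩
  loopless := ⟨fun x h => h.1 rfl⟩
/-- The image in `ZMod (3*d-1)` of the natural numbers in `[a, b]`. -/
def castIcc (d a b : ℕ) : Set (ZMod (3 * d - 1)) :=
  (fun i : ℕ => (i : ZMod (3 * d - 1))) '' Set.Icc a b
/-- The subgraph of `G` induced on `S` has no induced matching with two edges:
there are no four distinct vertices `u, v, u', v'` in `S` with `uv` and `u'v'`
edges and no other edges among them. -/
def NoInducedTwoMatching {V : Type*} (G : SimpleGraph V) (S : Set V) : Prop :=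
  ¬ ∃ u v u' v', u ∈ S ∧ v ∈ S ∧ u' ∈ S ∧ v' ∈ S ∧
    u ≠ u' ∧ u ≠ v' ∧ v ≠ u' ∧ v ≠ v' ∧
    G.Adj u v ∧ G.Adj u' v' ∧
    ¬ G.Adj u u' ∧ ¬ G.Adj u v' ∧ ¬ G.Adj v u' ∧ ¬ G.Adj v v'

lemma andrasfai_adj_aux (d : ℕ) (hd : 1 ≤ d) {a b : ℕ} (hab : a ≤ b)
    (ha : d + 1 ≤ a) (hb : b ≤ 3 * d - 1) :
    (andrasfai d).Adj (a : ZMod (3 * d - 1)) (b : ZMod (3 * d - 1)) ↔ d ≤ b - a := by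
  haveI : NeZero (3 * d - 1) := ⟨by omega⟩
  have hlt : b - a < 3 * d - 1 := by omega
  have h1 : ((b : ZMod (3 * d - 1)) - a) = ((b - a : ℕ) : ZMod (3 * d - 1)) :=
    (Nat.cast_sub hab).symm
  have hv1 : ((b : ZMod (3 * d - 1)) - (a : ZMod (3 * d - 1))).val = b - a := by
    rw [h1, ZMod.val_cast_of_lt hlt]
  rcases eq_or_lt_of_le hab with rfl | hlt2
  · constructor
    · intro h; exact absurd rfl h.1
    · intro h; omega
  · have hne0 : ((b : ZMod (3 * d - 1)) - (a : ZMod (3 * d - 1))) ≠ 0 := by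
      intro h
      rw [h] at hv1
      simp [ZMod.val_zero] at hv1
      omega
    have hne : (a : ZMod (3 * d - 1)) ≠ (b : ZMod (3 * d - 1)) := by
      intro h; exact hne0 (by rw [h]; ring)
    have hv2 : ((a : ZMod (3 * d - 1)) - (b : ZMod (3 * d - 1))).val
        = (3 * d - 1) - (b - a) := by
      have h2 : (a : ZMod (3 * d - 1)) - b = -((b : ZMod (3 * d - 1)) - a) := by ring
      rw [h2, ZMod.neg_val, if_neg hne0, hv1]
    constructor
    · rintro ⟨-, h | h⟩ <;> rw [hv1, hv2] at * <;> omega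
    · intro h
      refine ⟨hne, Or.inl ?_⟩
      rw [hv1]; omega

lemma andrasfai_adj_iff (d : ℕ) (hd : 1 ≤ d) {a b : ℕ}
    (ha : a ∈ Set.Icc (d + 1) (3 * d - 1)) (hb : b ∈ Set.Icc (d + 1) (3 * d - 1)) :
    (andrasfai d).Adj (a : ZMod (3 * d - 1)) (b : ZMod (3 * d - 1)) ↔
      (d ≤ b - a ∨ d ≤ a - b) := by
  rcases le_total a b with h | h
  · rw [andrasfai_adj_aux d hd h ha.1 hb.2]; omega
  · rw [SimpleGraph.adj_comm, andrasfai_adj_aux d hd h hb.1 ha.2]; omega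

lemma andrasfai_mem_aux (d : ℕ) {u : ZMod (3 * d - 1)}
    (h : u ∈ castIcc d (d + 1) (2 * d) ∪ castIcc d (2 * d + 1) (3 * d - 1)) :
    ∃ a ∈ Set.Icc (d + 1) (3 * d - 1), u = (a : ZMod (3 * d - 1)) := by
  rcases h with ⟨a, ha, rfl⟩ | ⟨a, ha, rfl⟩ <;> obtain ⟨h1, h2⟩ := ha
  · exact ⟨a, ⟨h1, by omega⟩, rfl⟩
  · exact ⟨a, ⟨by omega, h2⟩, rfl⟩

/-- With `D_2 = {d+1,...,2d}` and `D_3 = {2d+1,...,3d-1}`, the subgraph of the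
Andrásfai graph `Γ_d` induced on `D_2 ∪ D_3` has no induced matching with two
edges. -/
theorem andrasfai_D2_D3_noInducedTwoMatching (d : ℕ) (hd : 1 ≤ d) :
    NoInducedTwoMatching (andrasfai d)
      (castIcc d (d + 1) (2 * d) ∪ castIcc d (2 * d + 1) (3 * d - 1)) := by
  rintro ⟨u, v, u', v', hu, hv, hu', hv', -, -, -, -, huv, hu'v', h1, h2, h3, h4⟩
  obtain ⟨a, ha, rfl⟩ := andrasfai_mem_aux d hu
  obtain ⟨b, hb, rfl⟩ := andrasfai_mem_aux d hv
  obtain ⟨a', ha', rfl⟩ := andrasfai_mem_aux d hu'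
  obtain ⟨b', hb', rfl⟩ := andrasfai_mem_aux d hv'
  rw [andrasfai_adj_iff d hd ha hb] at huv
  rw [andrasfai_adj_iff d hd ha' hb'] at hu'v'
  rw [andrasfai_adj_iff d hd ha ha'] at h1
  rw [andrasfai_adj_iff d hd ha hb'] at h2
  rw [andrasfai_adj_iff d hd hb ha'] at h3
  rw [andrasfai_adj_iff d hd hb hb'] at h4
  simp only [Set.mem_Icc] at ha hb ha' hb'
  omega
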